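/- Let H: [0,T] → ℝ be a function that is Hölder continuous of exponent σ ∈ (0,1] and is locally constant on the complement of the support of its distributional derivative H'. Suppose the Hausdorff dimension of Spt(H') is strictly less than σ. Then H is constant on [0,T]. -/

import Mathlib

open Set
open scoped ENNReal Topology
open MeasureTheory

/-- a `σ`-Hölder continuous function on `[0,T]` that is locally constant
outside a closed set `K ⊆ (0,T)` (the support of its distributional derivative) of
Hausdorff dimension strictly less than `σ` is constant on `[0,T]`. -/
theorem stmt15 (T σ CH : ℝ) (hT : 0 < T) (hσ : σ ∈ Set.Ioc (0 : ℝ) 1)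
    (H : ℝ → ℝ)
    (hHol : ∀ s ∈ Set.Icc (0 : ℝ) T, ∀ t ∈ Set.Icc (0 : ℝ) T,
      |H t - H s| ≤ CH * |t - s| ^ σ)
    (K : Set ℝ) (hKclosed : IsClosed K) (hKsub : K ⊆ Set.Ioo 0 T)
    -- H is locally constant on [0,T] outside K
    (hloc : ∀ t ∈ Set.Icc (0 : ℝ) T, t ∉ K →
      ∃ ε > 0, ∀ s ∈ Set.Icc (0 : ℝ) T, |s - t| < ε → H s = H t)
    (hdim : dimH K < ENNReal.ofReal σ) :
    ∀ t ∈ Set.Icc (0 : ℝ) T, H t = H 0 := by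
  obtain ⟨hσ0, hσ1⟩ := hσ
  have h0T : (0 : ℝ) ∈ Set.Icc (0 : ℝ) T := ⟨le_refl 0, hT.le⟩
  have hTT : T ∈ Set.Icc (0 : ℝ) T := ⟨hT.le, le_refl T⟩
  -- CH is nonnegative
  have hCH : 0 ≤ CH := by
    have h1 := hHol 0 h0T T hTT
    have h2 : (0 : ℝ) < |T - 0| ^ σ := Real.rpow_pos_of_pos (by rw [sub_zero, abs_of_pos hT]; exact hT) σ
    nlinarith [abs_nonneg (H T - H 0)]
  -- Hölder continuity as `HolderOnWith` on `Icc 0 T`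
  have hHolOn : HolderOnWith CH.toNNReal σ.toNNReal H (Set.Icc 0 T) := by
    intro x hx y hy
    have hle := hHol y hy x hx
    rw [edist_dist, edist_dist, Real.dist_eq, Real.dist_eq]
    rw [Real.coe_toNNReal σ hσ0.le]
    calc ENNReal.ofReal |H x - H y| ≤ ENNReal.ofReal (CH * |x - y| ^ σ) :=
          ENNReal.ofReal_le_ofReal hle
      _ = ENNReal.ofReal CH * ENNReal.ofReal (|x - y| ^ σ) := by
          rw [ENNReal.ofReal_mul hCH]
      _ = (CH.toNNReal : ℝ≥0∞) * ENNReal.ofReal |x - y| ^ σ := by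
          rw [ENNReal.ofReal_rpow_of_nonneg (abs_nonneg _) hσ0.le]
          rfl
  -- continuity of H on [0,T]
  have hcont : ContinuousOn H (Set.Icc 0 T) :=
    hHolOn.continuousOn (by simpa using hσ0)
  -- μH[σ] K = 0
  have hKmeas : μH[(σ.toNNReal : ℝ)] K = 0 := by
    apply hausdorffMeasure_of_dimH_lt (d := σ.toNNReal)
    exact hdim
  -- volume of H '' K is 0
  have hHK : MeasureTheory.volume (H '' K) = 0 := by
    have him := (hHolOn.mono (fun x hx => (hKsub hx).1.le |> fun h => ⟨h, ((hKsub hx).2).le⟩ :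
        K ⊆ Set.Icc 0 T)).hausdorffMeasure_image_le (by simpa using hσ0) (d := 1) zero_le_one
    rw [show ((σ.toNNReal : ℝ) * 1) = (σ.toNNReal : ℝ) by ring, hKmeas, mul_zero] at him
    rw [← MeasureTheory.hausdorffMeasure_real]
    exact le_antisymm him (zero_le)
  -- H '' (Icc 0 T \ K) is countable
  have hcnt : (H '' (Set.Icc 0 T \ K)).Countable := by
    have hsub : H '' (Set.Icc 0 T \ K) ⊆ H '' (Set.Icc 0 T ∩ Set.range ((↑) : ℚ → ℝ)) := by
      rintro _ ⟨t, ⟨htI, htK⟩, rfl⟩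
      obtain ⟨ε, hε, hconst⟩ := hloc t htI htK
      set a := max 0 (t - ε) with ha
      set b := min T (t + ε) with hb
      have hab : a < b := by
        rcases lt_or_eq_of_le htI.2 with h | h
        · exact lt_of_le_of_lt (max_le htI.1 (by linarith)) (lt_min h (by linarith))
        · exact lt_of_lt_of_le (max_lt (h ▸ hT) (by linarith)) (le_min htI.2 (by linarith))
      obtain ⟨q, hq1, hq2⟩ := exists_rat_btwn hab
      have hqI : (q : ℝ) ∈ Set.Icc (0 : ℝ) T :=
        ⟨le_of_lt (lt_of_le_of_lt (le_max_left _ _) hq1), le_of_lt (lt_of_lt_of_le hq2 (min_le_left _ _))⟩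
      have hqε : |(q : ℝ) - t| < ε := by
        rw [abs_lt]
        constructor
        · have := lt_of_le_of_lt (le_max_right 0 (t - ε)) hq1; linarith
        · have := lt_of_lt_of_le hq2 (min_le_right T (t + ε)); linarith
      exact ⟨q, ⟨hqI, ⟨q, rfl⟩⟩, hconst q hqI hqε⟩
    exact Set.Countable.mono hsub
      (((Set.countable_range _).mono Set.inter_subset_right).image H)
  -- volume of H '' Icc 0 T is 0
  have himg : MeasureTheory.volume (H '' Set.Icc 0 T) = 0 := by
    have hsub : H '' Set.Icc 0 T ⊆ H '' K ∪ H '' (Set.Icc 0 T \ K) := by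
      rintro _ ⟨t, ht, rfl⟩
      by_cases htK : t ∈ K
      · exact Or.inl ⟨t, htK, rfl⟩
      · exact Or.inr ⟨t, ⟨ht, htK⟩, rfl⟩
    exact MeasureTheory.measure_mono_null hsub
      (MeasureTheory.measure_union_null hHK (hcnt.measure_zero _))
  -- the image is preconnected, hence an interval; measure zero forces it to be a point
  intro t ht
  by_contra hne
  have hpre : IsPreconnected (H '' Set.Icc 0 T) := (isPreconnected_Icc).image H hcont
  have hord : (H '' Set.Icc 0 T).OrdConnected := hpre.ordConnected
  have hmem0 : H 0 ∈ H '' Set.Icc 0 T := ⟨0, h0T, rfl⟩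
  have hmemt : H t ∈ H '' Set.Icc 0 T := ⟨t, ht, rfl⟩
  have hIcc : Set.Icc (min (H 0) (H t)) (max (H 0) (H t)) ⊆ H '' Set.Icc 0 T := by
    rcases le_total (H 0) (H t) with h | h
    · rw [min_eq_left h, max_eq_right h]; exact hord.out hmem0 hmemt
    · rw [min_eq_right h, max_eq_left h]; exact hord.out hmemt hmem0
  have hlt : min (H 0) (H t) < max (H 0) (H t) := by
    rcases lt_or_gt_of_ne (Ne.symm hne) with h | h
    · rw [min_eq_left h.le, max_eq_right h.le]; exact h
    · rw [min_eq_right h.le, max_eq_left h.le]; exact h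
  have := MeasureTheory.measure_mono_null hIcc himg
  rw [Real.volume_Icc] at this
  exact (ENNReal.ofReal_pos.mpr (sub_pos.mpr hlt)).ne' this
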